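/- Every blowup set Y ⊆ ℝ^n is polygonally connected: for all x, y ∈ Y there exist finitely many points x_0, …, x_N ∈ ℝ^n with x_0 = x, x_N = y, and the line segment {(1−t)x_{j−1} + t x_j : 0 ≤ t ≤ 1} contained in Y for every j ∈ {1,…,N}. -/

import Mathlib

/-- The `i`-th standard chart of the blowing-up of `ℝⁿ` with center `{x : x_I = 0}`. -/
def blowChart {n : ℕ} (I : Finset (Fin n)) (i : Fin n) (y : Fin n → ℝ) : Fin n → ℝ :=
  fun j => if j ∈ I ∧ j ≠ i then y i * y j else y j

/-- Intervals in `ℝ` whose endpoints lie in `ℚ ∪ {−∞,+∞}` (including degenerate ones). -/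
inductive IsRatInterval : Set ℝ → Prop
  | empty : IsRatInterval ∅
  | univ : IsRatInterval Set.univ
  | Icc (a b : ℚ) : IsRatInterval (Set.Icc (a : ℝ) b)
  | Ico (a b : ℚ) : IsRatInterval (Set.Ico (a : ℝ) b)
  | Ioc (a b : ℚ) : IsRatInterval (Set.Ioc (a : ℝ) b)
  | Ioo (a b : ℚ) : IsRatInterval (Set.Ioo (a : ℝ) b)
  | Ici (a : ℚ) : IsRatInterval (Set.Ici (a : ℝ))
  | Ioi (a : ℚ) : IsRatInterval (Set.Ioi (a : ℝ))
  | Iic (a : ℚ) : IsRatInterval (Set.Iic (a : ℝ))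
  | Iio (a : ℚ) : IsRatInterval (Set.Iio (a : ℝ))

/-- A rational box in `ℝⁿ`: a product of rational intervals. -/
def IsRatBox {n : ℕ} (B : Set (Fin n → ℝ)) : Prop :=
  ∃ S : Fin n → Set ℝ, (∀ j, IsRatInterval (S j)) ∧ B = {y | ∀ j, y j ∈ S j}

/-- Blowup sets in `ℝⁿ`, defined inductively: rational boxes are blowup sets, and the
preimage of a blowup set meeting `{x : x_I = 0}` under a standard blowup chart `π_{I,i}`,
intersected with a rational box in the `I`-coordinates, is a blowup set. -/
inductive IsBlowupSet {n : ℕ} : Set (Fin n → ℝ) → Prop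
  | box {B : Set (Fin n → ℝ)} (hB : IsRatBox B) : IsBlowupSet B
  | blow {X : Set (Fin n → ℝ)} (hX : IsBlowupSet X) (I : Finset (Fin n)) (hI : I.Nonempty)
      (hmeet : ∃ x ∈ X, ∀ j ∈ I, x j = 0) (i : Fin n) (hi : i ∈ I)
      (S : Fin n → Set ℝ) (hS : ∀ j, IsRatInterval (S j)) :
      IsBlowupSet {y | blowChart I i y ∈ X ∧ ∀ j ∈ I, y j ∈ S j}


lemma IsRatInterval.convex {C : Set ℝ} (h : IsRatInterval C) : Convex ℝ C := by
  cases h with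
  | empty => exact convex_empty
  | univ => exact convex_univ
  | Icc a b => exact convex_Icc _ _
  | Ico a b => exact convex_Ico _ _
  | Ioc a b => exact convex_Ioc _ _
  | Ioo a b => exact convex_Ioo _ _
  | Ici a => exact convex_Ici _
  | Ioi a => exact convex_Ioi _
  | Iic a => exact convex_Iic _
  | Iio a => exact convex_Iio _

lemma prod_pow_single {n : ℕ} (j : Fin n) (y : Fin n → ℝ) :
    (∏ j' : Fin n, y j' ^ (Pi.single j 1 : Fin n → ℕ) j') = y j := by
  rw [Finset.prod_eq_single j]
  · simp
  · intro b _ hb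
    simp [Pi.single_eq_of_ne hb]
  · simp

lemma prod_blowChart {n : ℕ} (I : Finset (Fin n)) (i : Fin n) (hi : i ∈ I)
    (b : Fin n → ℕ) (y : Fin n → ℝ) :
    (∏ j, blowChart I i y j ^ b j)
      = ∏ j, y j ^ (if j = i then ∑ j' ∈ I, b j' else b j) := by
  have step1 : (∏ j, blowChart I i y j ^ b j)
      = (∏ j, (if j ∈ I ∧ j ≠ i then (y i) ^ b j else 1)) * ∏ j, y j ^ b j := by
    rw [← Finset.prod_mul_distrib]
    refine Finset.prod_congr rfl ?_
    intro j _
    by_cases h : j ∈ I ∧ j ≠ i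
    · simp only [blowChart, if_pos h, mul_pow]
    · simp only [blowChart, if_neg h, one_mul]
  have step2 : (∏ j, (if j ∈ I ∧ j ≠ i then (y i) ^ b j else 1))
      = y i ^ (∑ j ∈ I.erase i, b j) := by
    rw [← Finset.prod_pow_eq_pow_sum, ← Finset.prod_filter]
    congr 1
    ext j
    simp [Finset.mem_erase, and_comm]
  rw [step1, step2]
  rw [← Finset.mul_prod_erase Finset.univ _ (Finset.mem_univ i),
      ← Finset.mul_prod_erase Finset.univ (fun j => y j ^ (if j = i then ∑ j' ∈ I, b j' else b j)) (Finset.mem_univ i)]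
  rw [if_pos rfl, ← Finset.add_sum_erase I b hi]
  rw [pow_add]
  have : (∏ j ∈ Finset.univ.erase i, y j ^ (if j = i then b i + ∑ j' ∈ I.erase i, b j' else b j))
      = ∏ j ∈ Finset.univ.erase i, y j ^ b j := by
    refine Finset.prod_congr rfl ?_
    intro j hj
    rw [if_neg (Finset.mem_erase.mp hj).1]
  rw [this]
  ring

/-- A "good representation" of a set: an (arbitrary) family of monomial constraints with
convex value-sets, where every non-linear constraint's value-set contains `0`. -/
def GoodRep {n : ℕ} (X : Set (Fin n → ℝ)) : Prop :=
  ∃ (ι : Type) (a : ι → Fin n → ℕ) (J : ι → Set ℝ),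
    (∀ k, Convex ℝ (J k)) ∧
    (∀ k, (0:ℝ) ∈ J k ∨ ∃ j, a k = Pi.single j 1) ∧
    X = {y | ∀ k, (∏ j, y j ^ a k j) ∈ J k}

theorem IsBlowupSet.goodRep {n : ℕ} {X : Set (Fin n → ℝ)} (h : IsBlowupSet X) : GoodRep X := by
  induction h with
  | box hB =>
    obtain ⟨S, hS, rfl⟩ := hB
    refine ⟨Fin n, fun j => Pi.single j 1, S, fun j => (hS j).convex, fun j => Or.inr ⟨j, rfl⟩, ?_⟩
    ext y
    simp only [Set.mem_setOf_eq, prod_pow_single]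
  | @blow X hX I hI hmeet i hi S hS ih =>
    obtain ⟨ι, a, J, hconv, hinvar, hXeq⟩ := ih
    refine ⟨ι ⊕ Fin n,
      Sum.elim (fun k => fun j => if j = i then ∑ j' ∈ I, a k j' else a k j)
        (fun j₀ => Pi.single j₀ 1),
      Sum.elim J (fun j₀ => if j₀ ∈ I then S j₀ else Set.univ),
      ?_, ?_, ?_⟩
    · rintro (k | j₀)
      · exact hconv k
      · by_cases h : j₀ ∈ I
        · simpa [h] using (hS j₀).convex
        · simpa [h] using convex_univ
    · rintro (k | j₀)
      · rcases hinvar k with h0 | ⟨j, hj⟩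
        · exact Or.inl h0
        · by_cases hjI : j ∈ I
          · by_cases hji : j = i
            · rw [hji] at hj
              refine Or.inr ⟨i, ?_⟩
              funext j''
              by_cases h'' : j'' = i
              · subst h''
                simp only [Sum.elim_inl, if_pos rfl, hj, Pi.single_eq_same]
                rw [Finset.sum_eq_single_of_mem j'' hi (fun b _ hb => Pi.single_eq_of_ne hb 1)]
                exact Pi.single_eq_same _ _
              · simp only [Sum.elim_inl, if_neg h'', hj]
            · obtain ⟨z, hzX, hz0⟩ := hmeet
              rw [hXeq] at hzX
              have hz := hzX k
              rw [hj, prod_pow_single, hz0 j hjI] at hz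
              exact Or.inl hz
          · have hji : j ≠ i := fun h => hjI (h ▸ hi)
            refine Or.inr ⟨j, ?_⟩
            funext j''
            by_cases h'' : j'' = i
            · subst h''
              simp only [Sum.elim_inl, if_pos rfl, hj]
              rw [Pi.single_eq_of_ne (Ne.symm hji)]
              exact Finset.sum_eq_zero fun b hb => Pi.single_eq_of_ne (fun h : b = j => hjI (h ▸ hb)) 1
            · simp only [Sum.elim_inl, if_neg h'', hj]
      · exact Or.inr ⟨j₀, rfl⟩
    · ext y
      simp only [Set.mem_setOf_eq]
      constructor
      · rintro ⟨h1, h2⟩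
        rintro (k | j₀)
        · rw [hXeq] at h1
          have := h1 k
          rwa [prod_blowChart I i hi] at this
        · simp only [Sum.elim_inr, prod_pow_single]
          by_cases h : j₀ ∈ I
          · simpa [h] using h2 j₀ h
          · simp [h]
      · intro hy
        constructor
        · rw [hXeq]
          intro k
          rw [prod_blowChart I i hi]
          exact hy (Sum.inl k)
        · intro j₀ hj₀
          have := hy (Sum.inr j₀)
          simpa [prod_pow_single, hj₀] using this

theorem GoodRep.polyConn {n : ℕ} {X : Set (Fin n → ℝ)} (hrep : GoodRep X)
    {u v : Fin n → ℝ} (hu : u ∈ X) (hv : v ∈ X) :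
    ∃ (N : ℕ) (c : ℕ → (Fin n → ℝ)), c 0 = u ∧ c N = v ∧
      ∀ j : ℕ, 1 ≤ j → j ≤ N → segment ℝ (c (j - 1)) (c j) ⊆ X := by
  classical
  obtain ⟨ι, a, J, hconv, hinvar, rfl⟩ := hrep
  simp only [Set.mem_setOf_eq] at hu hv
  set Z : Fin n → Prop := fun j => ∀ k, a k = Pi.single j 1 → (0:ℝ) ∈ J k with hZdef
  obtain ⟨u', hu'p⟩ : ∃ u' : Fin n → ℝ, ∀ j, u' j = if Z j then 0 else u j :=
    ⟨_, fun _ => rfl⟩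
  obtain ⟨v', hv'p⟩ : ∃ v' : Fin n → ℝ, ∀ j, v' j = if Z j then 0 else v j :=
    ⟨_, fun _ => rfl⟩
  obtain ⟨w, hwp⟩ : ∃ w : Fin n → ℝ, ∀ j, w j = if |u' j| ≤ |v' j| then u' j else v' j :=
    ⟨_, fun _ => rfl⟩
  -- scalar lemma
  have key_t : ∀ (p q : Fin n → ℝ), (∀ k, (∏ j, p j ^ a k j) ∈ J k) →
      (∀ k, (∏ j, q j ^ a k j) ∈ J k) → ∀ j, ¬ Z j → |q j| ≤ |p j| →
      ∃ t : ℝ, 0 ≤ t ∧ t ≤ 1 ∧ q j = t * p j := by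
    intro p q hp hq j hZj habs
    obtain ⟨k, hk, h0⟩ : ∃ k, a k = Pi.single j 1 ∧ (0:ℝ) ∉ J k := by
      by_contra hc
      push_neg at hc
      exact hZj hc
    have hpj : p j ∈ J k := by have := hp k; rwa [hk, prod_pow_single] at this
    have hqj : q j ∈ J k := by have := hq k; rwa [hk, prod_pow_single] at this
    have hpne : p j ≠ 0 := fun h => h0 (h ▸ hpj)
    have hsign : 0 ≤ q j * p j := by
      by_contra hneg
      push_neg at hneg
      have hOC := (hconv k).ordConnected
      rcases mul_neg_iff.mp hneg with ⟨hq1, hp1⟩ | ⟨hq1, hp1⟩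
      · exact h0 (hOC.out hpj hqj ⟨le_of_lt hp1, le_of_lt hq1⟩)
      · exact h0 (hOC.out hqj hpj ⟨le_of_lt hq1, le_of_lt hp1⟩)
    refine ⟨q j * p j / (p j * p j), ?_, ?_, ?_⟩
    · exact div_nonneg hsign (mul_self_nonneg _)
    · rw [div_le_one (mul_self_pos.mpr hpne)]
      calc q j * p j ≤ |q j * p j| := le_abs_self _
        _ = |q j| * |p j| := abs_mul _ _
        _ ≤ |p j| * |p j| := by
            apply mul_le_mul_of_nonneg_right habs (abs_nonneg _)
        _ = p j * p j := abs_mul_abs_self _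
    · field_simp
  have hZu' : ∀ j, Z j → u' j = 0 := fun j hj => by rw [hu'p j, if_pos hj]
  have hZv' : ∀ j, Z j → v' j = 0 := fun j hj => by rw [hv'p j, if_pos hj]
  have hNu' : ∀ j, ¬ Z j → u' j = u j := fun j hj => by rw [hu'p j, if_neg hj]
  have hNv' : ∀ j, ¬ Z j → v' j = v j := fun j hj => by rw [hv'p j, if_neg hj]
  -- linear constraint values
  have hlin_u' : ∀ k j, a k = Pi.single j 1 → u' j ∈ J k := by
    intro k j hk
    by_cases hZj : Z j
    · rw [hZu' j hZj]; exact hZj k hk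
    · rw [hNu' j hZj]; have := hu k; rwa [hk, prod_pow_single] at this
  have hlin_v' : ∀ k j, a k = Pi.single j 1 → v' j ∈ J k := by
    intro k j hk
    by_cases hZj : Z j
    · rw [hZv' j hZj]; exact hZj k hk
    · rw [hNv' j hZj]; have := hv k; rwa [hk, prod_pow_single] at this
  have hlin_w : ∀ k j, a k = Pi.single j 1 → w j ∈ J k := by
    intro k j hk
    rw [hwp j]
    by_cases h : |u' j| ≤ |v' j|
    · rw [if_pos h]; exact hlin_u' k j hk
    · rw [if_neg h]; exact hlin_v' k j hk
  -- the scaling core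
  have hscale : ∀ (p x : Fin n → ℝ), (∀ k, (∏ j, p j ^ a k j) ∈ J k) →
      (∀ j, ∃ t : ℝ, 0 ≤ t ∧ t ≤ 1 ∧ x j = t * p j) →
      (∀ k j, a k = Pi.single j 1 → x j ∈ J k) →
      ∀ k, (∏ j, x j ^ a k j) ∈ J k := by
    intro p x hp hx hlin k
    rcases hinvar k with h0 | ⟨j, hk⟩
    · choose t ht0 ht1 hxt using hx
      have heq : (∏ j, x j ^ a k j) = (∏ j, t j ^ a k j) * ∏ j, p j ^ a k j := by
        rw [← Finset.prod_mul_distrib]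
        exact Finset.prod_congr rfl fun j _ => by rw [hxt j, mul_pow]
      have hT0 : 0 ≤ ∏ j, t j ^ a k j :=
        Finset.prod_nonneg fun j _ => pow_nonneg (ht0 j) _
      have hT1 : (∏ j, t j ^ a k j) ≤ 1 :=
        Finset.prod_le_one (fun j _ => pow_nonneg (ht0 j) _)
          (fun j _ => pow_le_one₀ (ht0 j) (ht1 j))
      have := hconv k (hp k) h0 hT0 (by linarith : (0:ℝ) ≤ 1 - ∏ j, t j ^ a k j)
        (by ring)
      simpa [smul_eq_mul, heq] using this
    · rw [hk, prod_pow_single]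
      exact hlin k j hk
  -- w j = t * u' j and w j = t * v' j
  have hwt_u : ∀ j, ∃ t : ℝ, 0 ≤ t ∧ t ≤ 1 ∧ w j = t * u' j := by
    intro j
    by_cases hZj : Z j
    · refine ⟨0, le_refl _, zero_le_one, ?_⟩
      rw [hwp j, hZu' j hZj, hZv' j hZj]
      simp
    · rw [hwp j]
      by_cases h : |u' j| ≤ |v' j|
      · exact ⟨1, zero_le_one, le_refl _, by rw [if_pos h, one_mul]⟩
      · rw [if_neg h, hNu' j hZj, hNv' j hZj]
        exact key_t u v hu hv j hZj (by
          rw [← hNu' j hZj, ← hNv' j hZj]; exact le_of_lt (lt_of_not_ge h))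
  have hwt_v : ∀ j, ∃ t : ℝ, 0 ≤ t ∧ t ≤ 1 ∧ w j = t * v' j := by
    intro j
    by_cases hZj : Z j
    · refine ⟨0, le_refl _, zero_le_one, ?_⟩
      rw [hwp j, hZu' j hZj, hZv' j hZj]
      simp
    · rw [hwp j]
      by_cases h : |u' j| ≤ |v' j|
      · rw [if_pos h, hNu' j hZj, hNv' j hZj]
        exact key_t v u hv hu j hZj (by rw [← hNu' j hZj, ← hNv' j hZj]; exact h)
      · exact ⟨1, zero_le_one, le_refl _, by rw [if_neg h, one_mul]⟩
  -- box-hull inclusions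
  have hseg1 : ∀ x : Fin n → ℝ,
      (∀ j, ∃ s : ℝ, 0 ≤ s ∧ s ≤ 1 ∧ x j = (1 - s) * u j + s * u' j) →
      ∀ k, (∏ j, x j ^ a k j) ∈ J k := by
    intro x hx
    apply hscale u x hu
    · intro j
      obtain ⟨s, h0, h1, hs⟩ := hx j
      by_cases hZj : Z j
      · exact ⟨1 - s, by linarith, by linarith, by rw [hs, hZu' j hZj]; ring⟩
      · exact ⟨1, zero_le_one, le_refl _, by rw [hs, hNu' j hZj]; ring⟩
    · intro k j hk
      obtain ⟨s, h0, h1, hs⟩ := hx j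
      have huj : u j ∈ J k := by have := hu k; rwa [hk, prod_pow_single] at this
      have hu'j : u' j ∈ J k := hlin_u' k j hk
      have := hconv k huj hu'j (by linarith : (0:ℝ) ≤ 1 - s) h0 (by ring)
      simpa [smul_eq_mul, hs] using this
  have hseg4 : ∀ x : Fin n → ℝ,
      (∀ j, ∃ s : ℝ, 0 ≤ s ∧ s ≤ 1 ∧ x j = (1 - s) * v j + s * v' j) →
      ∀ k, (∏ j, x j ^ a k j) ∈ J k := by
    intro x hx
    apply hscale v x hv
    · intro j
      obtain ⟨s, h0, h1, hs⟩ := hx j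
      by_cases hZj : Z j
      · exact ⟨1 - s, by linarith, by linarith, by rw [hs, hZv' j hZj]; ring⟩
      · exact ⟨1, zero_le_one, le_refl _, by rw [hs, hNv' j hZj]; ring⟩
    · intro k j hk
      obtain ⟨s, h0, h1, hs⟩ := hx j
      have hvj : v j ∈ J k := by have := hv k; rwa [hk, prod_pow_single] at this
      have hv'j : v' j ∈ J k := hlin_v' k j hk
      have := hconv k hvj hv'j (by linarith : (0:ℝ) ≤ 1 - s) h0 (by ring)
      simpa [smul_eq_mul, hs] using this
  have hu'mem : ∀ k, (∏ j, u' j ^ a k j) ∈ J k :=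
    hseg1 u' fun j => ⟨1, zero_le_one, le_refl _, by ring⟩
  have hv'mem : ∀ k, (∏ j, v' j ^ a k j) ∈ J k :=
    hseg4 v' fun j => ⟨1, zero_le_one, le_refl _, by ring⟩
  have hseg2 : ∀ x : Fin n → ℝ,
      (∀ j, ∃ s : ℝ, 0 ≤ s ∧ s ≤ 1 ∧ x j = (1 - s) * u' j + s * w j) →
      ∀ k, (∏ j, x j ^ a k j) ∈ J k := by
    intro x hx
    apply hscale u' x hu'mem
    · intro j
      obtain ⟨s, h0, h1, hs⟩ := hx j
      obtain ⟨t, ht0, ht1, hwj⟩ := hwt_u j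
      refine ⟨(1 - s) + s * t, by nlinarith, by nlinarith, ?_⟩
      rw [hs, hwj]; ring
    · intro k j hk
      obtain ⟨s, h0, h1, hs⟩ := hx j
      have := hconv k (hlin_u' k j hk) (hlin_w k j hk) (by linarith : (0:ℝ) ≤ 1 - s) h0 (by ring)
      simpa [smul_eq_mul, hs] using this
  have hseg3 : ∀ x : Fin n → ℝ,
      (∀ j, ∃ s : ℝ, 0 ≤ s ∧ s ≤ 1 ∧ x j = (1 - s) * w j + s * v' j) →
      ∀ k, (∏ j, x j ^ a k j) ∈ J k := by
    intro x hx
    apply hscale v' x hv'mem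
    · intro j
      obtain ⟨s, h0, h1, hs⟩ := hx j
      obtain ⟨t, ht0, ht1, hwj⟩ := hwt_v j
      refine ⟨(1 - s) * t + s, by nlinarith, by nlinarith, ?_⟩
      rw [hs, hwj]; ring
    · intro k j hk
      obtain ⟨s, h0, h1, hs⟩ := hx j
      have := hconv k (hlin_w k j hk) (hlin_v' k j hk) (by linarith : (0:ℝ) ≤ 1 - s) h0 (by ring)
      simpa [smul_eq_mul, hs] using this
  -- assemble the path
  refine ⟨4, fun k => if k = 0 then u else if k = 1 then u' else if k = 2 then w
    else if k = 3 then v' else v, by norm_num, by norm_num, ?_⟩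
  intro j hj1 hj4 x hx
  obtain ⟨α, β, hα, hβ, hαβ, hxeq⟩ := hx
  have hcoord : ∀ (p q : Fin n → ℝ), α • p + β • q = x →
      ∀ j', x j' = (1 - β) * p j' + β * q j' := by
    intro p q hpq j'
    rw [← hpq]
    simp only [Pi.add_apply, Pi.smul_apply, smul_eq_mul]
    have hα' : α = 1 - β := by linarith
    rw [hα']
  interval_cases j
  · norm_num at hxeq
    exact fun k => hseg1 x (fun j' => ⟨β, hβ, by linarith, hcoord u u' hxeq j'⟩) k
  · norm_num at hxeq
    exact fun k => hseg2 x (fun j' => ⟨β, hβ, by linarith, hcoord u' w hxeq j'⟩) k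
  · norm_num at hxeq
    exact fun k => hseg3 x (fun j' => ⟨β, hβ, by linarith, hcoord w v' hxeq j'⟩) k
  · norm_num at hxeq
    exact fun k => hseg4 x (fun j' => ⟨1 - β, by linarith, by linarith, by
      rw [hcoord v' v hxeq j']; ring⟩) k

/-- **Blowup sets are polygonally connected.**  For every blowup set `Y ⊆ ℝⁿ` and all
`x, y ∈ Y` there are finitely many points `c 0 = x, …, c N = y` such that each segment
`[c (j−1), c j]` is contained in `Y`. -/
theorem stmt10 {n : ℕ} (Y : Set (Fin n → ℝ)) (hY : IsBlowupSet Y)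
    (x y : Fin n → ℝ) (hx : x ∈ Y) (hy : y ∈ Y) :
    ∃ (N : ℕ) (c : ℕ → (Fin n → ℝ)), c 0 = x ∧ c N = y ∧
      ∀ j : ℕ, 1 ≤ j → j ≤ N → segment ℝ (c (j - 1)) (c j) ⊆ Y := by
  exact hY.goodRep.polyConn hx hy
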